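/- With F̄_L as above, the condition rank(F̄_L) − rank(F̄_{L−1}) = ω implies rank([F₀ F₁ ⋯ F_L]) = ω, i.e., the ω × n(L+1) matrix formed by the first block row of F̄_L has full row rank. -/

import Mathlib

open Matrix Module Submodule

theorem stmt_12 {F : Type*} [Field F] {ω n : ℕ} (L : ℕ)
    (Fc : ℕ → Matrix (Fin ω) (Fin n) F)
    (Fbar : ∀ m : ℕ, Matrix (Fin m × Fin ω) (Fin m × Fin n) F)
    (hFbar : ∀ m p q, Fbar m p q =
      if (p.1 : ℕ) ≤ (q.1 : ℕ) then Fc ((q.1 : ℕ) - (p.1 : ℕ)) p.2 q.2 else 0)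
    (firstRow : Matrix (Fin ω) (Fin (L + 1) × Fin n) F)
    (hfirstRow : ∀ a q, firstRow a q = Fc (q.1 : ℕ) a q.2)
    (hrank : (Fbar (L + 1)).rank = (Fbar L).rank + ω) :
    firstRow.rank = ω := by
  set M := Fbar (L + 1) with hM
  -- the bottom block of rows of M
  set B : Matrix (Fin L × Fin ω) (Fin (L + 1) × Fin n) F :=
    fun p q => M (p.1.succ, p.2) q with hB
  -- rows of M are rows of firstRow or of B
  have hrows : Set.range M ⊆ Set.range firstRow ∪ Set.range B := by
    rintro _ ⟨⟨p1, a⟩, rfl⟩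
    induction p1 using Fin.cases with
    | zero =>
      left
      refine ⟨a, ?_⟩
      funext q
      rw [hfirstRow, hM, hFbar]
      simp
    | succ i =>
      right
      exact ⟨(i, a), rfl⟩
  have h1 : M.rank ≤ firstRow.rank + B.rank := by
    rw [Matrix.rank_eq_finrank_span_row, Matrix.rank_eq_finrank_span_row,
      Matrix.rank_eq_finrank_span_row]
    calc finrank F (span F (Set.range M))
        ≤ finrank F ↥(span F (Set.range firstRow) ⊔ span F (Set.range B)) := by
          apply Submodule.finrank_mono
          rw [← Submodule.span_union]
          exact Submodule.span_mono hrows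
      _ ≤ finrank F ↥(span F (Set.range firstRow)) + finrank F ↥(span F (Set.range B)) :=
          Submodule.finrank_add_le_finrank_add_finrank _ _
  -- columns of B lie in the column span of Fbar L
  have hcols : Set.range Bᵀ ⊆ (span F (Set.range (Fbar L)ᵀ) : Submodule F _) := by
    rintro _ ⟨⟨q1, c⟩, rfl⟩
    induction q1 using Fin.cases with
    | zero =>
      have : Bᵀ (0, c) = 0 := by
        funext p
        simp only [Matrix.transpose_apply, hB, hM]
        change Fbar (L + 1) (p.1.succ, p.2) (0, c) = 0
        rw [hFbar]
        simp
      rw [this]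
      exact Submodule.zero_mem _
    | succ j =>
      have : Bᵀ (j.succ, c) = (Fbar L)ᵀ (j, c) := by
        funext p
        simp only [Matrix.transpose_apply, hB, hM]
        change Fbar (L + 1) (p.1.succ, p.2) (j.succ, c) = Fbar L p (j, c)
        rw [hFbar, hFbar]
        simp [Fin.val_succ, Nat.succ_le_succ_iff, Nat.succ_sub_succ]
      rw [this]
      exact Submodule.subset_span ⟨(j, c), rfl⟩
  have h2 : B.rank ≤ (Fbar L).rank := by
    rw [Matrix.rank_eq_finrank_span_cols, Matrix.rank_eq_finrank_span_cols]
    apply Submodule.finrank_mono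
    rw [Submodule.span_le]
    exact hcols
  have h3 : firstRow.rank ≤ ω := by
    simpa using firstRow.rank_le_card_height
  omega
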